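/- Let K ∈ ℝ^{N×N}, let H_e, H_r ∈ ℝ^{N×s}, and let Σ ∈ ℝ^{s×s} be a diagonal matrix with positive diagonal entries σ_1,…,σ_s, satisfying K H_r = H_e Σ and K^⊤ H_e = H_r Σ. Then the KSVD primal objective J = (1/2)·Tr(H_e Σ H_e^⊤) + (1/2)·Tr(H_r Σ H_r^⊤) − Tr(H_e^⊤ K H_r) equals zero. -/
import Mathlib


open Matrix

/-- Zero-value objective lemma: at any stationary solution `(H_e, H_r, Σ)` of the KSVD
dual shifted eigenvalue problem, the primal objective
`J = (1/2)Tr(H_e Σ H_eᵀ) + (1/2)Tr(H_r Σ H_rᵀ) − Tr(H_eᵀ K H_r)` equals zero. -/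
theorem ksvd_zero_objective
    (N s : ℕ) (K : Matrix (Fin N) (Fin N) ℝ)
    (He Hr : Matrix (Fin N) (Fin s) ℝ) (σ : Fin s → ℝ) (hσ : ∀ l, 0 < σ l)
    (h1 : K * Hr = He * Matrix.diagonal σ)
    (h2 : Kᵀ * He = Hr * Matrix.diagonal σ) :
    (1 / 2 : ℝ) * Matrix.trace (He * Matrix.diagonal σ * Heᵀ)
      + (1 / 2 : ℝ) * Matrix.trace (Hr * Matrix.diagonal σ * Hrᵀ)
      - Matrix.trace (Heᵀ * K * Hr) = 0 := by
  have ha : Matrix.trace (Heᵀ * K * Hr) = Matrix.trace (He * Matrix.diagonal σ * Heᵀ) := by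
    rw [Matrix.mul_assoc, h1, trace_mul_comm]
  have hb : Matrix.trace (Heᵀ * K * Hr) = Matrix.trace (Hr * Matrix.diagonal σ * Hrᵀ) := by
    have : Matrix.trace (Heᵀ * K * Hr) = Matrix.trace ((Heᵀ * K * Hr)ᵀ) := (trace_transpose _).symm
    rw [this, transpose_mul, transpose_mul, transpose_transpose, ← Matrix.mul_assoc, Matrix.mul_assoc, h2,
      trace_mul_comm]
  linarith
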